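/- For all integers h ≥ 1, n with 0 ≤ n < h, and rational x: C(x, n) = Σ_{i=1}^{n} (-1)^{i+1} · C(x-h+i, i) · C(x, n-i) · (h!/(h-i)!) · ((2h-1-i)!/(2h-1)!) + C(x+h, n) · C(h-1, n) / C(2h-1, n). -/

import Mathlib

noncomputable def gchoose (x : ℚ) (k : ℕ) : ℚ :=
  (∏ i ∈ Finset.range k, (x - i)) / (Nat.factorial k)

open Finset

lemma gchoose_zero (x : ℚ) : gchoose x 0 = 1 := by simp [gchoose]

lemma fact_ne (k : ℕ) : (Nat.factorial k : ℚ) ≠ 0 := by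
  exact_mod_cast (Nat.factorial_ne_zero k)

lemma gchoose_succ (x : ℚ) (k : ℕ) :
    gchoose x (k + 1) = gchoose x k * (x - k) / (k + 1) := by
  have h1 : (Nat.factorial k : ℚ) ≠ 0 := fact_ne k
  have h2 : ((k : ℚ) + 1) ≠ 0 := by positivity
  rw [gchoose, gchoose, prod_range_succ, Nat.factorial_succ]
  push_cast
  field_simp

lemma prod_sub_shift (y : ℚ) (k : ℕ) :
    (∏ i ∈ Finset.range k, (y - 1 - i)) * y = (∏ i ∈ Finset.range k, (y - i)) * (y - k) := by
  induction k with
  | zero => simp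
  | succ k ih =>
    rw [prod_range_succ, prod_range_succ]
    push_cast at ih ⊢
    linear_combination (y - 1 - (k : ℚ)) * ih

lemma gchoose_pred (y : ℚ) (k : ℕ) :
    gchoose (y - 1) k * y = gchoose y k * (y - k) := by
  rw [gchoose, gchoose, div_mul_eq_mul_div, div_mul_eq_mul_div, prod_sub_shift]

lemma gchoose_reflect (z : ℚ) (k : ℕ) :
    gchoose ((k : ℚ) - 1 - z) k = (-1) ^ k * gchoose z k := by
  rw [gchoose, gchoose]
  have key : (∏ i ∈ range k, ((k : ℚ) - 1 - z - i)) = (-1) ^ k * ∏ i ∈ range k, (z - i) := by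
    calc (∏ i ∈ range k, ((k : ℚ) - 1 - z - i))
        = ∏ i ∈ range k, (-1 * (z - ((k - 1 - i : ℕ) : ℚ))) := by
          refine prod_congr rfl fun i hi => ?_
          have hik : i < k := mem_range.mp hi
          have hc : ((k - 1 - i : ℕ) : ℚ) = (k : ℚ) - 1 - i := by
            have h1 : k - 1 - i = k - (1 + i) := by omega
            rw [h1, Nat.cast_sub (by omega)]
            push_cast; ring
          rw [hc]; ring
      _ = (-1) ^ k * ∏ i ∈ range k, (z - ((k - 1 - i : ℕ) : ℚ)) := by
          rw [prod_mul_distrib, prod_const, card_range]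
      _ = (-1) ^ k * ∏ i ∈ range k, (z - (i : ℚ)) := by
          rw [prod_range_reflect (fun j => z - (j : ℚ)) k]
  rw [key, mul_div_assoc]

lemma gchoose_natCast : ∀ (k m : ℕ), k ≤ m → gchoose (m : ℚ) k = (m.choose k : ℚ)
  | 0, m, _ => by simp [gchoose_zero]
  | (k+1), m, hk => by
    have hk' : k ≤ m := by omega
    rw [gchoose_succ, gchoose_natCast k m hk']
    have h := Nat.choose_succ_right_eq m k
    have hc : ((m.choose (k+1)) : ℚ) * ((k : ℚ) + 1) = (m.choose k : ℚ) * ((m : ℚ) - k) := by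
      have := congrArg (fun t : ℕ => (t : ℚ)) h
      push_cast [Nat.cast_sub hk'] at this
      linarith [this]
    have h2 : ((k : ℚ) + 1) ≠ 0 := by positivity
    field_simp
    linarith [hc]

noncomputable def Fq (h : ℕ) (x : ℚ) (n i : ℕ) : ℚ :=
  gchoose ((h : ℚ) - 1 - x) i * gchoose x (n - i) * gchoose (2 * (h : ℚ) - 1 - i) (h - 1)

noncomputable def Gq (h : ℕ) (x : ℚ) (n i : ℕ) : ℚ :=
  -(i : ℚ) * (2 * (h : ℚ) - i) * gchoose ((h : ℚ) - 1 - x) i * gchoose x (n + 1 - i) *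
    gchoose (2 * (h : ℚ) - 1 - i) (h - 1)

lemma key (h n i : ℕ) (x : ℚ) (hi : i ≤ n) (hn : n + 1 < h) :
    ((n : ℚ) + 1) * (2 * (h : ℚ) - 1 - n) * Fq h x (n + 1) i
      - (x + (h : ℚ) - n) * ((h : ℚ) - 1 - n) * Fq h x n i
      = Gq h x n (i + 1) - Gq h x n i := by
  obtain ⟨k, rfl⟩ : ∃ k, n = i + k := ⟨n - i, by omega⟩
  have s1 : i + k + 1 - i = k + 1 := by omega
  have s2 : i + k - i = k := by omega
  have s3 : i + k + 1 - (i + 1) = k := by omega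
  rw [Fq, Fq, Gq, Gq, s1, s2, s3]
  set A := gchoose ((h : ℚ) - 1 - x) i with hA
  set B := gchoose x k with hB
  set Cc := gchoose (2 * (h : ℚ) - 1 - i) (h - 1) with hC
  have eB : gchoose x (k + 1) = B * (x - k) / (k + 1) := gchoose_succ x k
  have eA : gchoose ((h : ℚ) - 1 - x) (i + 1) = A * ((h : ℚ) - 1 - x - i) / (i + 1) :=
    gchoose_succ _ i
  have hyne : (2 * (h : ℚ) - 1 - i) ≠ 0 := by
    have h1 : (i : ℚ) + 2 ≤ (h : ℚ) := by exact_mod_cast (by omega : i + 2 ≤ h)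
    have h2 : (1 : ℚ) ≤ (h : ℚ) := by exact_mod_cast (by omega : 1 ≤ h)
    intro hcon; nlinarith
  have hcast : ((h - 1 : ℕ) : ℚ) = (h : ℚ) - 1 := by
    rw [Nat.cast_sub (by omega)]; norm_num
  have eC : gchoose (2 * (h : ℚ) - 1 - ((i : ℚ) + 1)) (h - 1)
      = Cc * ((h : ℚ) - i) / (2 * (h : ℚ) - 1 - i) := by
    have h0 : 2 * (h : ℚ) - 1 - ((i : ℚ) + 1) = (2 * (h : ℚ) - 1 - i) - 1 := by ring
    have h1 := gchoose_pred (2 * (h : ℚ) - 1 - i) (h - 1)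
    rw [hcast] at h1
    rw [h0]
    rw [eq_div_iff hyne]
    rw [← hC] at h1
    linarith [h1]
  push_cast [eB, eA, eC]
  have hk1 : ((k : ℚ) + 1) ≠ 0 := by positivity
  have hi1 : ((i : ℚ) + 1) ≠ 0 := by positivity
  field_simp
  ring

lemma cast2h (h : ℕ) (hh : 1 ≤ h) : ((2 * h - 1 : ℕ) : ℚ) = 2 * (h : ℚ) - 1 := by
  rw [Nat.cast_sub (by omega)]; push_cast; ring

lemma star (h : ℕ) (hh : 1 ≤ h) :
    ∀ n, n < h → ∀ x : ℚ,
      (∑ i ∈ range (n + 1), Fq h x n i)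
        = gchoose (x + h) n * gchoose (2 * (h : ℚ) - 1 - n) h := by
  intro n
  induction n with
  | zero =>
    intro _ x
    rw [Finset.sum_range_one]
    rw [Fq]
    simp only [Nat.sub_zero, Nat.cast_zero, sub_zero, gchoose_zero, one_mul, mul_one]
    have c1 : gchoose (2 * (h : ℚ) - 1) (h - 1) = (((2 * h - 1).choose (h - 1) : ℕ) : ℚ) := by
      rw [← cast2h h hh]; exact gchoose_natCast (h - 1) (2 * h - 1) (by omega)
    have c2 : gchoose (2 * (h : ℚ) - 1) h = (((2 * h - 1).choose h : ℕ) : ℚ) := by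
      rw [← cast2h h hh]; exact gchoose_natCast h (2 * h - 1) (by omega)
    have c3 : (2 * h - 1).choose (h - 1) = (2 * h - 1).choose h := by
      have := Nat.choose_symm (by omega : h ≤ 2 * h - 1)
      rw [show 2 * h - 1 - h = h - 1 by omega] at this
      exact this
    rw [c1, c2, c3]
  | succ n ih =>
    intro hlt x
    have hstar := ih (by omega) x
    have tel : ∑ i ∈ range (n + 1), (Gq h x n (i + 1) - Gq h x n i)
        = Gq h x n (n + 1) - Gq h x n 0 := Finset.sum_range_sub (Gq h x n) (n + 1)
    have g0 : Gq h x n 0 = 0 := by simp [Gq]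
    have hsum : ∑ i ∈ range (n + 1),
        (((n : ℚ) + 1) * (2 * (h : ℚ) - 1 - n) * Fq h x (n + 1) i
          - (x + (h : ℚ) - n) * ((h : ℚ) - 1 - n) * Fq h x n i)
        = Gq h x n (n + 1) := by
      rw [Finset.sum_congr rfl
        (fun i hi => key h n i x (Nat.lt_succ_iff.mp (Finset.mem_range.mp hi)) hlt)]
      rw [tel, g0, sub_zero]
    have e : ∑ i ∈ range (n + 1), (((n : ℚ) + 1) * (2 * (h : ℚ) - 1 - n) * Fq h x (n + 1) i)
        = Gq h x n (n + 1)
          + (x + (h : ℚ) - n) * ((h : ℚ) - 1 - n)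
            * (gchoose (x + h) n * gchoose (2 * (h : ℚ) - 1 - n) h) := by
      rw [Finset.sum_sub_distrib] at hsum
      have h2 : ∑ i ∈ range (n + 1), ((x + (h : ℚ) - n) * ((h : ℚ) - 1 - n) * Fq h x n i)
          = (x + (h : ℚ) - n) * ((h : ℚ) - 1 - n)
            * (gchoose (x + h) n * gchoose (2 * (h : ℚ) - 1 - n) h) := by
        rw [← Finset.mul_sum, hstar]
      linarith [hsum, h2]
    have hend : Gq h x n (n + 1)
        + ((n : ℚ) + 1) * (2 * (h : ℚ) - 1 - n) * Fq h x (n + 1) (n + 1) = 0 := by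
      rw [Gq, Fq]; simp only [Nat.sub_self, gchoose_zero]
      push_cast
      ring
    have BIG : ((n : ℚ) + 1) * (2 * (h : ℚ) - 1 - n) * (∑ i ∈ range (n + 1 + 1), Fq h x (n + 1) i)
        = (x + (h : ℚ) - n) * ((h : ℚ) - 1 - n)
          * (gchoose (x + h) n * gchoose (2 * (h : ℚ) - 1 - n) h) := by
      rw [Finset.sum_range_succ (Fq h x (n + 1)) (n + 1), mul_add, Finset.mul_sum, e]
      linarith [hend]
    have hne1 : ((n : ℚ) + 1) ≠ 0 := by positivity
    have hne2 : (2 * (h : ℚ) - 1 - n) ≠ 0 := by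
      have h1 : (n : ℚ) + 2 ≤ (h : ℚ) := by exact_mod_cast (by omega : n + 2 ≤ h)
      have h2 : (1 : ℚ) ≤ (h : ℚ) := by exact_mod_cast hh
      intro hcon; nlinarith
    have e1' : gchoose (x + h) (n + 1) * ((n : ℚ) + 1) = gchoose (x + h) n * (x + (h : ℚ) - n) := by
      rw [gchoose_succ]
      field_simp
    have e2 : gchoose (2 * (h : ℚ) - 1 - ((n : ℚ) + 1)) h * (2 * (h : ℚ) - 1 - n)
        = gchoose (2 * (h : ℚ) - 1 - n) h * ((h : ℚ) - 1 - n) := by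
      have h1 := gchoose_pred (2 * (h : ℚ) - 1 - n) h
      have harg : 2 * (h : ℚ) - 1 - ((n : ℚ) + 1) = 2 * (h : ℚ) - 1 - n - 1 := by ring
      have harg2 : 2 * (h : ℚ) - 1 - (n : ℚ) - (h : ℚ) = (h : ℚ) - 1 - n := by ring
      rw [harg2] at h1
      rw [harg, h1]
    apply mul_left_cancel₀ (mul_ne_zero hne1 hne2)
    rw [BIG]
    push_cast
    linear_combination (-(2 * (h : ℚ) - 1 - n) * gchoose (2 * (h : ℚ) - 1 - ((n : ℚ) + 1)) h) * e1'
      + (-(x + (h : ℚ) - n) * gchoose (x + h) n) * e2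

lemma NF1 (h j : ℕ) (hh : 1 ≤ h) (hj : j ≤ h - 1) :
    gchoose (2 * (h : ℚ) - 1 - j) (h - 1)
      = (((2 * h - 1).choose (h - 1) : ℕ) : ℚ)
        * ((Nat.factorial h : ℚ) / (Nat.factorial (h - j) : ℚ))
        * ((Nat.factorial (2 * h - 1 - j) : ℚ) / (Nat.factorial (2 * h - 1) : ℚ)) := by
  have hcast : (2 * (h : ℚ) - 1 - (j : ℚ)) = ((2 * h - 1 - j : ℕ) : ℚ) := by
    rw [Nat.cast_sub (by omega : j ≤ 2 * h - 1), cast2h h hh]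
  rw [hcast, gchoose_natCast (h - 1) (2 * h - 1 - j) (by omega)]
  rw [Nat.cast_choose ℚ (by omega : h - 1 ≤ 2 * h - 1 - j),
    Nat.cast_choose ℚ (by omega : h - 1 ≤ 2 * h - 1)]
  rw [show 2 * h - 1 - j - (h - 1) = h - j by omega, show 2 * h - 1 - (h - 1) = h by omega]
  have f1 := fact_ne (h - 1); have f2 := fact_ne (h - j); have f3 := fact_ne h
  have f4 := fact_ne (2 * h - 1); have f5 := fact_ne (2 * h - 1 - j)
  field_simp

lemma NF2 (h n : ℕ) (hh : 1 ≤ h) (hn : n < h) :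
    gchoose (2 * (h : ℚ) - 1 - n) h * gchoose (2 * (h : ℚ) - 1) n
      = gchoose ((h : ℚ) - 1) n * gchoose (2 * (h : ℚ) - 1) (h - 1) := by
  have hc1 : (2 * (h : ℚ) - 1 - (n : ℚ)) = ((2 * h - 1 - n : ℕ) : ℚ) := by
    rw [Nat.cast_sub (by omega : n ≤ 2 * h - 1), cast2h h hh]
  have hc2 : ((h : ℚ) - 1) = ((h - 1 : ℕ) : ℚ) := by
    rw [Nat.cast_sub hh]; norm_num
  rw [hc1, hc2, ← cast2h h hh]
  rw [gchoose_natCast h (2 * h - 1 - n) (by omega),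
    gchoose_natCast n (2 * h - 1) (by omega),
    gchoose_natCast n (h - 1) (by omega),
    gchoose_natCast (h - 1) (2 * h - 1) (by omega)]
  rw [Nat.cast_choose ℚ (by omega : h ≤ 2 * h - 1 - n),
    Nat.cast_choose ℚ (by omega : n ≤ 2 * h - 1),
    Nat.cast_choose ℚ (by omega : n ≤ h - 1),
    Nat.cast_choose ℚ (by omega : h - 1 ≤ 2 * h - 1)]
  rw [show 2 * h - 1 - n - h = h - 1 - n by omega,
    show 2 * h - 1 - (h - 1) = h by omega]
  have f1 := fact_ne (h - 1); have f2 := fact_ne h; have f3 := fact_ne n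
  have f4 := fact_ne (2 * h - 1); have f5 := fact_ne (2 * h - 1 - n)
  have f6 := fact_ne (h - 1 - n)
  field_simp

lemma gchoose_sign (h i : ℕ) (x : ℚ) :
    gchoose ((h : ℚ) - 1 - x) i = (-1) ^ i * gchoose (x - (h : ℚ) + i) i := by
  have := gchoose_reflect (x - (h : ℚ) + i) i
  have harg : (i : ℚ) - 1 - (x - (h : ℚ) + i) = (h : ℚ) - 1 - x := by ring
  rw [harg] at this
  exact this

theorem stmt9 (h n : ℕ) (hh : 1 ≤ h) (hn : n < h) (x : ℚ) :
    gchoose x n =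
      (∑ i ∈ Finset.Icc 1 n, (-1 : ℚ) ^ (i + 1) * gchoose (x - h + i) i *
        gchoose x (n - i) * ((Nat.factorial h : ℚ) / (Nat.factorial (h - i) : ℚ)) *
        ((Nat.factorial (2 * h - 1 - i) : ℚ) / (Nat.factorial (2 * h - 1) : ℚ))) +
      gchoose (x + h) n * gchoose ((h : ℚ) - 1) n / gchoose (2 * (h : ℚ) - 1) n := by
  set f : ℕ → ℚ := fun i => (-1 : ℚ) ^ (i + 1) * gchoose (x - h + i) i *
        gchoose x (n - i) * ((Nat.factorial h : ℚ) / (Nat.factorial (h - i) : ℚ)) *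
        ((Nat.factorial (2 * h - 1 - i) : ℚ) / (Nat.factorial (2 * h - 1) : ℚ)) with hf
  set D : ℚ := (((2 * h - 1).choose (h - 1) : ℕ) : ℚ) with hD
  have Dne : D ≠ 0 := by
    rw [hD]
    have := Nat.choose_pos (by omega : h - 1 ≤ 2 * h - 1)
    positivity
  have hDg : gchoose (2 * (h : ℚ) - 1) (h - 1) = D := by
    rw [← cast2h h hh, hD]
    exact gchoose_natCast (h - 1) (2 * h - 1) (by omega)
  have hstar := star h hh n hn x
  rw [Finset.sum_range_succ' (Fq h x n) n] at hstar
  have hFq0 : Fq h x n 0 = gchoose x n * D := by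
    rw [Fq]
    simp only [gchoose_zero, one_mul, Nat.sub_zero, Nat.cast_zero, sub_zero]
    rw [hDg]
  have hIcc : (∑ i ∈ Finset.Icc 1 n, f i) = ∑ i ∈ Finset.range n, f (1 + i) := by
    rw [← Finset.Ico_add_one_right_eq_Icc, Finset.sum_Ico_eq_sum_range]
    norm_num
  have key2 : ∀ i ∈ Finset.range n, f (1 + i) * D = - Fq h x n (i + 1) := by
    intro i hi
    have hi' : i + 1 ≤ n := Finset.mem_range.mp hi
    have h1i : 1 + i = i + 1 := by omega
    rw [h1i, hf, Fq]
    simp only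
    rw [gchoose_sign h (i + 1) x, NF1 h (i + 1) hh (by omega), ← hD]
    push_cast
    ring
  have E1 : (∑ i ∈ Finset.Icc 1 n, f i) * D
      = gchoose x n * D - gchoose (x + h) n * gchoose (2 * (h : ℚ) - 1 - n) h := by
    rw [hIcc, Finset.sum_mul, Finset.sum_congr rfl key2, Finset.sum_neg_distrib]
    linarith [hstar, hFq0]
  have hCn : gchoose (2 * (h : ℚ) - 1) n = (((2 * h - 1).choose n : ℕ) : ℚ) := by
    rw [← cast2h h hh]
    exact gchoose_natCast n (2 * h - 1) (by omega)
  have hCnne : gchoose (2 * (h : ℚ) - 1) n ≠ 0 := by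
    rw [hCn]
    have := Nat.choose_pos (by omega : n ≤ 2 * h - 1)
    positivity
  have E2 : gchoose (x + h) n * gchoose ((h : ℚ) - 1) n / gchoose (2 * (h : ℚ) - 1) n * D
      = gchoose (x + h) n * gchoose (2 * (h : ℚ) - 1 - n) h := by
    have nf2 := NF2 h n hh hn
    rw [hDg] at nf2
    rw [div_mul_eq_mul_div, div_eq_iff hCnne]
    linear_combination (-(gchoose (x + (h:ℚ)) n)) * nf2
  apply mul_right_cancel₀ Dne
  rw [add_mul, E1, E2]
  ring
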